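/- Let u ∈ ℝⁿ and v ∈ ℝᵐ with ‖u‖_∞ ≤ 1 and ‖v‖_∞ ≤ 1. Then the rank-1 matrix T = u vᵀ satisfies ‖T‖_± ≤ 1. -/
import Mathlib

set_option maxHeartbeats 1000000

/-- A sign matrix has all entries ±1. -/
def IsSignMatrix {m n : Type*} (S : Matrix m n ℝ) : Prop :=
  ∀ i j, S i j = 1 ∨ S i j = -1

/-- The atomic norm of a real matrix: infimum of ∑ |αᵢ| over decompositions
    T = ∑ αᵢ Sᵢ into ±1-valued matrices. -/
noncomputable def atomicNorm {m n : Type*} (T : Matrix m n ℝ) : ℝ :=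
  sInf { c | ∃ (k : ℕ) (α : Fin k → ℝ) (S : Fin k → Matrix m n ℝ),
    (∀ i, IsSignMatrix (S i)) ∧ T = ∑ i, α i • S i ∧ c = ∑ i, |α i| }

noncomputable def sgnVec {n : ℕ} (t : Finset (Fin n)) : Fin n → ℝ :=
  fun i => if i ∈ t then 1 else -1

noncomputable def wVec {n : ℕ} (u : Fin n → ℝ) (t : Finset (Fin n)) : ℝ :=
  (∏ i ∈ t, (1 + u i)/2) * ∏ i ∈ Finset.univ \ t, (1 - u i)/2

lemma wVec_nonneg {n : ℕ} (u : Fin n → ℝ) (hu : ∀ i, |u i| ≤ 1) (t : Finset (Fin n)) :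
    0 ≤ wVec u t := by
  apply mul_nonneg <;> apply Finset.prod_nonneg <;> intro i _ <;>
    have := abs_le.mp (hu i) <;> linarith [this.1, this.2]

lemma sum_wVec {n : ℕ} (u : Fin n → ℝ) : ∑ t : Finset (Fin n), wVec u t = 1 := by
  have h := Finset.prod_add (fun i => (1 + u i)/2) (fun i => (1 - u i)/2)
    (Finset.univ : Finset (Fin n))
  rw [Finset.powerset_univ] at h
  have h1 : ∏ i : Fin n, ((1 + u i)/2 + (1 - u i)/2) = 1 := by
    apply Finset.prod_eq_one; intro i _; ring
  rw [h1] at h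
  simp only [wVec]
  exact h.symm

lemma sum_wVec_sgn {n : ℕ} (u : Fin n → ℝ) (j : Fin n) :
    ∑ t : Finset (Fin n), wVec u t * sgnVec t j = u j := by
  have key : ∀ t : Finset (Fin n), wVec u t * sgnVec t j
      = (∏ i ∈ t, (1 + u i)/2) *
        ∏ i ∈ Finset.univ \ t, ((if i = j then (-1 : ℝ) else 1) * ((1 - u i)/2)) := by
    intro t
    rw [Finset.prod_mul_distrib, Finset.prod_ite_eq' (Finset.univ \ t) j (fun _ => (-1 : ℝ))]
    simp only [Finset.mem_sdiff, Finset.mem_univ, true_and, sgnVec, wVec]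
    by_cases hj : j ∈ t <;> simp [hj]
  simp_rw [key]
  have h := Finset.prod_add (fun i => (1 + u i)/2)
    (fun i => (if i = j then (-1 : ℝ) else 1) * ((1 - u i)/2)) (Finset.univ : Finset (Fin n))
  rw [Finset.powerset_univ] at h
  have h1 : ∏ i : Fin n, ((1 + u i)/2 + (if i = j then (-1:ℝ) else 1) * ((1 - u i)/2))
      = u j := by
    have : ∀ i : Fin n, ((1 + u i)/2 + (if i = j then (-1:ℝ) else 1) * ((1 - u i)/2))
        = if i = j then u i else 1 := by
      intro i; by_cases hi : i = j <;> simp [hi] <;> ring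
    simp_rw [this]
    rw [Finset.prod_ite_eq' Finset.univ j (fun i => u i)]
    simp
  rw [h1] at h
  rw [← h]

lemma atomicNorm_le_sum_abs {M N ι : Type*} [Fintype ι] (T : Matrix M N ℝ)
    (α : ι → ℝ) (S : ι → Matrix M N ℝ) (hS : ∀ i, IsSignMatrix (S i))
    (hT : T = ∑ i, α i • S i) : atomicNorm T ≤ ∑ i, |α i| := by
  classical
  have hbdd : BddBelow { c | ∃ (k : ℕ) (α : Fin k → ℝ) (S : Fin k → Matrix M N ℝ),
      (∀ i, IsSignMatrix (S i)) ∧ T = ∑ i, α i • S i ∧ c = ∑ i, |α i| } := by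
    refine ⟨0, ?_⟩
    rintro c ⟨k', α', S', -, -, rfl⟩
    exact Finset.sum_nonneg fun i _ => abs_nonneg _
  apply csInf_le hbdd
  refine ⟨Fintype.card ι, fun j => α ((Fintype.equivFin ι).symm j),
    fun j => S ((Fintype.equivFin ι).symm j), fun j => hS _, ?_, ?_⟩
  · rw [hT]
    exact (Equiv.sum_comp (Fintype.equivFin ι).symm (fun i => α i • S i)).symm
  · exact (Equiv.sum_comp (Fintype.equivFin ι).symm (fun i => |α i|)).symm

/-- A rank-1 matrix with factors bounded by 1 in sup norm has atomic norm at most 1. -/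
theorem atomicNorm_vecMulVec_le_one {n m : ℕ} (u : Fin n → ℝ) (v : Fin m → ℝ)
    (hu : ∀ i, |u i| ≤ 1) (hv : ∀ j, |v j| ≤ 1) :
    atomicNorm (Matrix.vecMulVec u v) ≤ 1 := by
  classical
  have hsign : ∀ p : Finset (Fin n) × Finset (Fin m),
      IsSignMatrix (Matrix.vecMulVec (sgnVec p.1) (sgnVec p.2)) := by
    intro p a b
    simp only [Matrix.vecMulVec_apply, sgnVec]
    by_cases h1 : a ∈ p.1 <;> by_cases h2 : b ∈ p.2 <;> simp [h1, h2]
  have hdecomp : Matrix.vecMulVec u v = ∑ p : Finset (Fin n) × Finset (Fin m),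
      (wVec u p.1 * wVec v p.2) • Matrix.vecMulVec (sgnVec p.1) (sgnVec p.2) := by
    ext a b
    simp only [Matrix.sum_apply, Matrix.smul_apply, Matrix.vecMulVec_apply, smul_eq_mul]
    rw [Fintype.sum_prod_type]
    have : ∀ (t : Finset (Fin n)) (s : Finset (Fin m)),
        wVec u t * wVec v s * (sgnVec t a * sgnVec s b)
        = (wVec u t * sgnVec t a) * (wVec v s * sgnVec s b) := by intros; ring
    simp_rw [this]
    rw [← Finset.sum_mul_sum, sum_wVec_sgn u a, sum_wVec_sgn v b]
  have h := atomicNorm_le_sum_abs (Matrix.vecMulVec u v)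
    (fun p : Finset (Fin n) × Finset (Fin m) => wVec u p.1 * wVec v p.2)
    (fun p => Matrix.vecMulVec (sgnVec p.1) (sgnVec p.2)) hsign hdecomp
  have habs : ∑ p : Finset (Fin n) × Finset (Fin m), |wVec u p.1 * wVec v p.2| = 1 := by
    have h1 : ∀ p : Finset (Fin n) × Finset (Fin m),
        |wVec u p.1 * wVec v p.2| = wVec u p.1 * wVec v p.2 := fun p =>
      abs_of_nonneg (mul_nonneg (wVec_nonneg u hu _) (wVec_nonneg v hv _))
    simp_rw [h1]
    rw [Fintype.sum_prod_type, ← Finset.sum_mul_sum, sum_wVec u, sum_wVec v, one_mul]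
  rw [habs] at h
  exact h
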